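/- For 0 < ν < 1, p, k ∈ ℝ, and ω(x) = arccos(ν cos x), if ω(p+k) + ω(p−k) = ω(p+k') + ω(p−k') with k, k' ∈ (−π, π] and the equality holds modulo 2π with both sides in [2ω(p), 2π−2ω(p)], and p is not an integer multiple of π/2, then k' = k or k' = −k. -/

import Mathlib

open Real Set

/-- arccos u + arccos v < π iff 0 < u + v, for u,v in [-1,1]. -/
lemma arccos_add_lt_pi_iff {u v : ℝ} (hu1 : -1 ≤ u) (hu2 : u ≤ 1)
    (hv1 : -1 ≤ v) (hv2 : v ≤ 1) :
    Real.arccos u + Real.arccos v < Real.pi ↔ 0 < u + v := by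
  have h1 : Real.arccos u + Real.arccos v < Real.pi ↔
      Real.arccos u < Real.arccos (-v) := by
    rw [Real.arccos_neg]
    constructor <;> intro h <;> linarith
  rw [h1, Real.strictAntiOn_arccos.lt_iff_gt
    (by constructor <;> linarith) (by constructor <;> linarith)]
  constructor <;> intro h <;> linarith

/-- Core algebraic injectivity step. -/
lemma omega_pp_core (ν cp ck ck' X Y : ℝ) (hν0 : 0 < ν) (hν1 : ν < 1)
    (hcp : cp ≠ 0) (hsp : cp ^ 2 ≠ 1)
    (hX2 : X ^ 2 = 1 - ν^2*(1 + (2*cp^2-1)*(2*ck^2-1)) + ν^4*(cp^2+ck^2-1)^2)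
    (hY2 : Y ^ 2 = 1 - ν^2*(1 + (2*cp^2-1)*(2*ck'^2-1)) + ν^4*(cp^2+ck'^2-1)^2)
    (hE : ν^2*(cp^2+ck^2-1) - X = ν^2*(cp^2+ck'^2-1) - Y) :
    ck ^ 2 = ck' ^ 2 := by
  by_contra hne
  have hd : ck^2 - ck'^2 ≠ 0 := sub_ne_zero.2 hne
  have hEd : X - Y = ν^2*(ck^2-ck'^2) := by linear_combination -hE
  have hν2d : ν^2*(ck^2-ck'^2) ≠ 0 := mul_ne_zero (pow_ne_zero 2 hν0.ne') hd
  have hsum : ν^2*(ck^2-ck'^2) * (X+Y)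
      = ν^2*(ck^2-ck'^2) * (ν^2*((cp^2+ck^2-1)+(cp^2+ck'^2-1)) - 2*(2*cp^2-1)) := by
    linear_combination (-(X+Y))*hEd + hX2 - hY2
  have hXplus := mul_left_cancel₀ hν2d hsum
  have hXval : X = ν^2*(cp^2+ck^2-1) - (2*cp^2-1) := by
    linear_combination (hEd + hXplus)/2
  have hfin : (1-ν^2)*(1-(2*cp^2-1)^2) = 0 := by
    linear_combination (-1)*hX2 + (X + (ν^2*(cp^2+ck^2-1) - (2*cp^2-1)))*hXval
  have h1 : (0:ℝ) < 1 - ν^2 := by nlinarith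
  rcases mul_eq_zero.1 hfin with h | h
  · linarith
  · have h2 : cp^2 * (1 - cp^2) = 0 := by linear_combination h/4
    rcases mul_eq_zero.1 h2 with h3 | h3
    · exact hcp (by simpa using sq_eq_zero_iff.1 h3)
    · exact hsp (by linarith)

set_option maxHeartbeats 1000000 in
theorem omega_pp_injective (ν : ℝ) (hν0 : 0 < ν) (hν1 : ν < 1) (p : ℝ)
    (hp : ∀ n : ℤ, p ≠ n * (Real.pi / 2)) (k k' : ℝ)
    (hk : k ∈ Set.Ioc (-Real.pi) Real.pi) (hk' : k' ∈ Set.Ioc (-Real.pi) Real.pi)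
    (heq : Real.arccos (ν * Real.cos (p + k)) + Real.arccos (ν * Real.cos (p - k))
      = Real.arccos (ν * Real.cos (p + k')) + Real.arccos (ν * Real.cos (p - k'))) :
    k' = k ∨ k' = -k := by
  obtain ⟨hk1, hk2⟩ := hk
  obtain ⟨hk'1, hk'2⟩ := hk'
  have hcp : Real.cos p ≠ 0 := by
    intro h
    obtain ⟨n, hn⟩ := Real.cos_eq_zero_iff.1 h
    exact hp (2*n+1) (by rw [hn]; push_cast; ring)
  have hspne : Real.sin p ≠ 0 := by
    intro h
    obtain ⟨n, hn⟩ := Real.sin_eq_zero_iff.1 h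
    exact hp (2*n) (by rw [← hn]; push_cast; ring)
  have hb : ∀ t:ℝ, -1 ≤ ν * Real.cos t ∧ ν * Real.cos t ≤ 1 := by
    intro t
    have h1 := Real.neg_one_le_cos t
    have h2 := Real.cos_le_one t
    constructor <;> nlinarith
  have hfac : ∀ t:ℝ, 0 ≤ 1 - ν^2 * Real.cos t ^ 2 := by
    intro t
    have h1 := Real.neg_one_le_cos t
    have h2 := Real.cos_le_one t
    have h3 : 0 ≤ ν^2*(1 - Real.cos t^2) := mul_nonneg (sq_nonneg ν) (by nlinarith)
    have h4 : ν^2 ≤ 1 := by nlinarith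
    linarith
  -- trig product identities
  have hxy : ∀ m:ℝ, Real.cos (p+m) * Real.cos (p-m)
      = Real.cos p ^2 + Real.cos m ^2 - 1 := by
    intro m
    rw [Real.cos_add, Real.cos_sub]
    have h1 := Real.sin_sq p
    have h2 := Real.sin_sq m
    linear_combination (-(Real.sin m ^ 2)) * h1 - (1 - Real.cos p ^ 2) * h2
  have hS : ∀ m:ℝ, Real.cos (p+m)^2 + Real.cos (p-m)^2
      = 1 + (2*Real.cos p^2-1)*(2*Real.cos m^2-1) := by
    intro m
    rw [Real.cos_add, Real.cos_sub]
    have h1 := Real.sin_sq p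
    have h2 := Real.sin_sq m
    linear_combination (2*(1 - Real.cos m ^2)) * h1 + (2*Real.sin p ^2) * h2
  -- cosine of the arccos sums
  have hArc : ∀ m:ℝ, Real.cos (Real.arccos (ν * Real.cos (p+m)) + Real.arccos (ν * Real.cos (p-m)))
      = ν^2 * (Real.cos (p+m) * Real.cos (p-m))
        - Real.sqrt ((1 - ν^2*Real.cos (p+m)^2) * (1 - ν^2*Real.cos (p-m)^2)) := by
    intro m
    rw [Real.cos_add, Real.cos_arccos (hb _).1 (hb _).2, Real.cos_arccos (hb _).1 (hb _).2,
      Real.sin_arccos, Real.sin_arccos,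
      ← Real.sqrt_mul (by nlinarith [(hb (p+m)).1, (hb (p+m)).2] : (0:ℝ) ≤ 1 - (ν * Real.cos (p+m))^2),
      show (1 - (ν*Real.cos (p+m))^2) * (1 - (ν*Real.cos (p-m))^2)
        = (1 - ν^2*Real.cos (p+m)^2) * (1 - ν^2*Real.cos (p-m)^2) from by ring]
    ring
  have hcoseq : Real.cos (Real.arccos (ν * Real.cos (p + k)) + Real.arccos (ν * Real.cos (p - k)))
      = Real.cos (Real.arccos (ν * Real.cos (p + k')) + Real.arccos (ν * Real.cos (p - k'))) := by
    rw [heq]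
  rw [hArc k, hArc k'] at hcoseq
  -- the two square roots
  set X := Real.sqrt ((1 - ν^2*Real.cos (p+k)^2) * (1 - ν^2*Real.cos (p-k)^2)) with hXdef
  set Y := Real.sqrt ((1 - ν^2*Real.cos (p+k')^2) * (1 - ν^2*Real.cos (p-k')^2)) with hYdef
  have hX2 : X^2 = (1 - ν^2*Real.cos (p+k)^2) * (1 - ν^2*Real.cos (p-k)^2) :=
    Real.sq_sqrt (mul_nonneg (hfac _) (hfac _))
  have hY2 : Y^2 = (1 - ν^2*Real.cos (p+k')^2) * (1 - ν^2*Real.cos (p-k')^2) :=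
    Real.sq_sqrt (mul_nonneg (hfac _) (hfac _))
  have hX2' : X^2 = 1 - ν^2*(1 + (2*Real.cos p^2-1)*(2*Real.cos k^2-1))
      + ν^4*(Real.cos p^2+Real.cos k^2-1)^2 := by
    rw [hX2]
    linear_combination (ν^4*(Real.cos (p+k)*Real.cos (p-k) + (Real.cos p^2+Real.cos k^2-1))) * (hxy k)
      - ν^2 * (hS k)
  have hY2' : Y^2 = 1 - ν^2*(1 + (2*Real.cos p^2-1)*(2*Real.cos k'^2-1))
      + ν^4*(Real.cos p^2+Real.cos k'^2-1)^2 := by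
    rw [hY2]
    linear_combination (ν^4*(Real.cos (p+k')*Real.cos (p-k') + (Real.cos p^2+Real.cos k'^2-1))) * (hxy k')
      - ν^2 * (hS k')
  have hE : ν^2*(Real.cos p^2+Real.cos k^2-1) - X = ν^2*(Real.cos p^2+Real.cos k'^2-1) - Y := by
    linear_combination hcoseq - ν^2 * (hxy k) + ν^2 * (hxy k')
  have hcp2ne : Real.cos p ^ 2 ≠ 1 := by
    intro h
    apply hspne
    have : Real.sin p ^ 2 = 0 := by rw [Real.sin_sq, h]; ring
    simpa using sq_eq_zero_iff.1 this
  have hck2 : Real.cos k ^ 2 = Real.cos k' ^ 2 :=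
    omega_pp_core ν (Real.cos p) (Real.cos k) (Real.cos k') X Y hν0 hν1 hcp hcp2ne hX2' hY2' hE
  -- sign analysis: the sum compared with π determines the sign of cos p * cos k
  have key_lt : ∀ m:ℝ,
      (Real.arccos (ν * Real.cos (p+m)) + Real.arccos (ν * Real.cos (p-m)) < Real.pi
        ↔ 0 < Real.cos p * Real.cos m) := by
    intro m
    rw [arccos_add_lt_pi_iff (hb _).1 (hb _).2 (hb _).1 (hb _).2]
    have hrw : ν * Real.cos (p+m) + ν * Real.cos (p-m) = ν * (2*(Real.cos p * Real.cos m)) := by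
      rw [Real.cos_add, Real.cos_sub]; ring
    rw [hrw]
    constructor <;> intro h <;> nlinarith
  have key_gt : ∀ m:ℝ,
      (Real.pi < Real.arccos (ν * Real.cos (p+m)) + Real.arccos (ν * Real.cos (p-m))
        ↔ Real.cos p * Real.cos m < 0) := by
    intro m
    have h := arccos_add_lt_pi_iff (u := -(ν * Real.cos (p+m))) (v := -(ν * Real.cos (p-m)))
      (by linarith [(hb (p+m)).2]) (by linarith [(hb (p+m)).1])
      (by linarith [(hb (p-m)).2]) (by linarith [(hb (p-m)).1])
    rw [Real.arccos_neg, Real.arccos_neg] at h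
    have hrw : -(ν * Real.cos (p+m)) + -(ν * Real.cos (p-m))
        = -(ν * (2*(Real.cos p * Real.cos m))) := by
      rw [Real.cos_add, Real.cos_sub]; ring
    rw [hrw] at h
    constructor
    · intro hlt
      have := h.1 (by linarith)
      nlinarith
    · intro hlt
      have : (0:ℝ) < -(ν * (2*(Real.cos p * Real.cos m))) := by nlinarith
      have := h.2 this
      linarith
  -- cos k and cos k' have the same sign
  have hsign : 0 ≤ Real.cos k * Real.cos k' := by
    have hcp2 : 0 < Real.cos p ^ 2 :=
      (sq_nonneg _).lt_of_ne (Ne.symm (pow_ne_zero 2 hcp))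
    rcases lt_trichotomy (Real.cos p * Real.cos k) 0 with h | h | h
    · have h1 := (key_gt k).2 h
      rw [heq] at h1
      have h2 := (key_gt k').1 h1
      nlinarith
    · have h1 : ¬ (Real.arccos (ν * Real.cos (p+k)) + Real.arccos (ν * Real.cos (p-k)) < Real.pi) := by
        rw [key_lt k]; simp [h]
      have h2 : ¬ (Real.pi < Real.arccos (ν * Real.cos (p+k)) + Real.arccos (ν * Real.cos (p-k))) := by
        rw [key_gt k]; simp [h]
      have h3 : Real.cos p * Real.cos k' = 0 := by
        rcases lt_trichotomy (Real.cos p * Real.cos k') 0 with h' | h' | h'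
        · exact absurd (by rw [heq]; exact (key_gt k').2 h') h2
        · exact h'
        · exact absurd (by rw [heq]; exact (key_lt k').2 h') h1
      have hck0 : Real.cos k = 0 := by
        rcases mul_eq_zero.1 h with h'' | h''
        · exact absurd h'' hcp
        · exact h''
      have hck'0 : Real.cos k' = 0 := by
        rcases mul_eq_zero.1 h3 with h'' | h''
        · exact absurd h'' hcp
        · exact h''
      rw [hck0, hck'0]; norm_num
    · have h1 := (key_lt k).2 h
      rw [heq] at h1
      have h2 := (key_lt k').1 h1
      nlinarith
  -- conclude cos k = cos k'
  have hckeq : Real.cos k = Real.cos k' := by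
    have h0 : (Real.cos k - Real.cos k') * (Real.cos k + Real.cos k') = 0 := by
      linear_combination hck2
    rcases mul_eq_zero.1 h0 with h | h
    · linarith [sub_eq_zero.1 h]
    · have hck'neg : Real.cos k' = -Real.cos k := by linarith
      have : Real.cos k ^ 2 = 0 := by nlinarith
      have h4 : Real.cos k = 0 := by simpa using sq_eq_zero_iff.1 this
      rw [h4] at hck'neg ⊢
      rw [hck'neg]; ring
  -- finish: |k'| = |k|
  have hkle : |k| ≤ Real.pi := abs_le.2 ⟨hk1.le, hk2⟩
  have hk'le : |k'| ≤ Real.pi := abs_le.2 ⟨hk'1.le, hk'2⟩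
  have habs : |k'| = |k| :=
    Real.injOn_cos ⟨abs_nonneg _, hk'le⟩ ⟨abs_nonneg _, hkle⟩
      (by rw [Real.cos_abs, Real.cos_abs]; exact hckeq.symm)
  exact abs_eq_abs.1 habs
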